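/- Let J be a monomial ideal of S with minimal monomial generating set G_min(J). Then the radical √J equals the ideal of S generated by the squarefree monomials ∏_{i∈B} x_i, taken over all subsets B ⊆ {1,…,n} such that the ideal generated by {u({1,…,n}∖B) : u ∈ G_min(J)} equals S. (Equivalently, the Stanley–Reisner ideal of the Alexander dual of the eliminating simplicial complex of J equals √J.) -/

import Mathlib

open MvPolynomial

/-- An ideal of `K[x_1, …, x_n]` is a monomial ideal if it is generated by monomials. -/
def IsMonomialIdeal {K : Type*} [Field K] {n : ℕ} (I : Ideal (MvPolynomial (Fin n) K)) : Prop :=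
  ∃ G : Set (Fin n →₀ ℕ),
    I = Ideal.span ((fun a => (monomial a (1 : K) : MvPolynomial (Fin n) K)) '' G)

/-- `G_min(I)`: the exponent vectors of the minimal monomial generators of `I`, i.e. the
monomials `u ∈ I` such that `u / x_j ∉ I` for every variable `x_j` dividing `u`. -/
def minGens {K : Type*} [Field K] {n : ℕ} (I : Ideal (MvPolynomial (Fin n) K)) :
    Set (Fin n →₀ ℕ) :=
  {a | (monomial a (1 : K) : MvPolynomial (Fin n) K) ∈ I ∧
    ∀ j : Fin n, a j ≠ 0 →
      (monomial (a - Finsupp.single j 1) (1 : K) : MvPolynomial (Fin n) K) ∉ I}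

/-- The restriction `u(A)` of an exponent vector: `u(A) = ∏_{j ∈ A} x_j ^ (a j)`. -/
def restrictExp {n : ℕ} (A : Finset (Fin n)) (a : Fin n →₀ ℕ) : Fin n →₀ ℕ :=
  Finsupp.filter (· ∈ A) a

/-- The ideal generated by `{u(A) : u ∈ G_min(I)}`; the eliminating simplicial complex
of `I` consists of the `A ⊆ [n]` for which this ideal is all of `S`. -/
noncomputable def elimIdeal {K : Type*} [Field K] {n : ℕ} (I : Ideal (MvPolynomial (Fin n) K))
    (A : Finset (Fin n)) : Ideal (MvPolynomial (Fin n) K) :=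
  Ideal.span ((fun a => (monomial (restrictExp A a) (1 : K) : MvPolynomial (Fin n) K)) ''
    minGens I)

section Aux

variable {K : Type*} [Field K] {n : ℕ}

/-- the squarefree exponent vector supported on `B` -/
noncomputable def sqf {n : ℕ} (B : Finset (Fin n)) : Fin n →₀ ℕ := ∑ i ∈ B, Finsupp.single i 1

lemma sqf_apply (B : Finset (Fin n)) (j : Fin n) :
    sqf B j = if j ∈ B then 1 else 0 := by
  classical
  rw [sqf, Finset.sum_apply']
  simp [Finsupp.single_apply, Finset.sum_ite_eq B j (fun _ => 1)]

lemma prod_X_eq (B : Finset (Fin n)) :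
    ∏ i ∈ B, (X i : MvPolynomial (Fin n) K) = monomial (sqf B) 1 := by
  classical
  induction B using Finset.induction with
  | empty => simp [sqf, monomial_zero']
  | insert _ _ hx ih =>
    rename_i a s
    rw [Finset.prod_insert hx, ih, X, monomial_mul, one_mul, sqf, sqf, Finset.sum_insert hx]

lemma support_monomial_one (a : Fin n →₀ ℕ) :
    (monomial a (1 : K)).support = {a} := by
  classical rw [support_monomial, if_neg one_ne_zero]

lemma mono_mem_of_le {I : Ideal (MvPolynomial (Fin n) K)} {m a : Fin n →₀ ℕ}
    (h : monomial m (1 : K) ∈ I) (hle : m ≤ a) : monomial a (1 : K) ∈ I := by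
  have : (monomial a (1 : K) : MvPolynomial (Fin n) K)
      = monomial (a - m) 1 * monomial m 1 := by
    rw [monomial_mul, one_mul, tsub_add_cancel_of_le hle]
  rw [this]
  exact I.mul_mem_left _ h

lemma apply_le_sum (a : Fin n →₀ ℕ) (j : Fin n) : a j ≤ a.sum fun _ k => k := by
  by_cases h : a j = 0
  · simp [h]
  · exact Finset.single_le_sum (fun _ _ => Nat.zero_le _) (Finsupp.mem_support_iff.2 h)

lemma exists_minGen_aux (I : Ideal (MvPolynomial (Fin n) K)) :
    ∀ (N : ℕ) (a : Fin n →₀ ℕ), (a.sum fun _ k => k) ≤ N →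
      monomial a (1 : K) ∈ I → ∃ m ∈ minGens I, m ≤ a := by
  intro N
  induction N with
  | zero =>
    intro a ha h
    refine ⟨a, ⟨h, fun j hj _ => ?_⟩, le_refl a⟩
    exact absurd (Nat.le_antisymm (le_trans (apply_le_sum a j) ha) (Nat.zero_le _)) hj
  | succ N ih =>
    intro a ha h
    by_cases hmin : a ∈ minGens I
    · exact ⟨a, hmin, le_refl a⟩
    · simp only [minGens, Set.mem_setOf_eq, not_and, not_forall, not_not] at hmin
      obtain ⟨j, hj, hmem⟩ := hmin h
      set b := a - Finsupp.single j 1 with hb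
      have hsle : Finsupp.single j 1 ≤ a := Finsupp.single_le_iff.2 (Nat.one_le_iff_ne_zero.2 hj)
      have hba : b + Finsupp.single j 1 = a := tsub_add_cancel_of_le hsle
      have hsum : (b.sum fun _ k => k) + 1 = a.sum fun _ k => k := by
        rw [← hba, Finsupp.sum_add_index' (fun _ => rfl) (fun _ _ _ => rfl),
          Finsupp.sum_single_index rfl]
      obtain ⟨m, hm, hml⟩ := ih b (by omega) hmem
      exact ⟨m, hm, le_trans hml (le_trans le_self_add (le_of_eq hba))⟩

lemma exists_minGen {I : Ideal (MvPolynomial (Fin n) K)} {a : Fin n →₀ ℕ}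
    (h : monomial a (1 : K) ∈ I) : ∃ m ∈ minGens I, m ≤ a :=
  exists_minGen_aux I _ a le_rfl h

lemma elimIdeal_eq_top_iff (I : Ideal (MvPolynomial (Fin n) K)) (A : Finset (Fin n)) :
    elimIdeal I A = ⊤ ↔ ∃ m ∈ minGens I, ∀ i ∈ A, m i = 0 := by
  classical
  have him : ((fun a => (monomial (restrictExp A a) (1 : K) : MvPolynomial (Fin n) K)) ''
      minGens I) = (fun s => monomial s (1 : K)) '' (restrictExp A '' minGens I) := by
    rw [Set.image_image]
  rw [elimIdeal, him, Ideal.eq_top_iff_one, mem_ideal_span_monomial_image]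
  have h1 : (1 : MvPolynomial (Fin n) K) = monomial 0 1 := by simp [monomial_zero']
  rw [h1, support_monomial_one]
  constructor
  · intro h
    obtain ⟨s, ⟨m, hm, rfl⟩, hs⟩ := h 0 (Finset.mem_singleton_self 0)
    refine ⟨m, hm, fun i hi => ?_⟩
    have h0 : restrictExp A m = 0 :=
      le_antisymm hs (Finsupp.le_def.2 fun _ => Nat.zero_le _)
    have := congrArg (fun f => f i) h0
    simpa [restrictExp, Finsupp.filter_apply, hi] using this
  · rintro ⟨m, hm, hz⟩ e he
    refine ⟨restrictExp A m, ⟨m, hm, rfl⟩, ?_⟩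
    have h0 : restrictExp A m = 0 := by
      ext i
      by_cases hi : i ∈ A <;> simp [restrictExp, Finsupp.filter_apply, hi, hz i]
    simp [h0]

end Aux

/-- The radical of a monomial ideal `J` is the Stanley–Reisner ideal of the Alexander
dual of the eliminating simplicial complex of `J`: it is generated by the squarefree
monomials `∏_{i ∈ B} x_i` over all `B ⊆ [n]` such that the ideal generated by
`{u([n] ∖ B) : u ∈ G_min(J)}` is all of `S`. -/
theorem radical_eq_stanleyReisner_alexanderDual {K : Type*} [Field K] {n : ℕ}
    (J : Ideal (MvPolynomial (Fin n) K)) (hmon : IsMonomialIdeal J) :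
    J.radical =
      Ideal.span {m : MvPolynomial (Fin n) K |
        ∃ B : Finset (Fin n), elimIdeal J Bᶜ = ⊤ ∧ m = ∏ i ∈ B, X i} := by
  classical
  set Rset : Set (MvPolynomial (Fin n) K) :=
    {m | ∃ B : Finset (Fin n), elimIdeal J Bᶜ = ⊤ ∧ m = ∏ i ∈ B, X i} with hRset
  set R : Ideal (MvPolynomial (Fin n) K) := Ideal.span Rset with hR
  -- rewrite Rset as a monomial image
  have hRset' : Rset = (fun s => monomial s (1 : K)) ''
      {s | ∃ B : Finset (Fin n), elimIdeal J Bᶜ = ⊤ ∧ s = sqf B} := by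
    ext m
    constructor
    · rintro ⟨B, hB, rfl⟩
      exact ⟨sqf B, ⟨B, hB, rfl⟩, (prod_X_eq B).symm⟩
    · rintro ⟨s, ⟨B, hB, rfl⟩, rfl⟩
      exact ⟨B, hB, (prod_X_eq B).symm⟩
  have memR : ∀ p : MvPolynomial (Fin n) K, p ∈ R ↔
      ∀ e ∈ p.support, ∃ B : Finset (Fin n), elimIdeal J Bᶜ = ⊤ ∧ sqf B ≤ e := by
    intro p
    rw [hR, hRset', mem_ideal_span_monomial_image]
    constructor
    · intro h e he
      obtain ⟨s, ⟨B, hB, rfl⟩, hle⟩ := h e he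
      exact ⟨B, hB, hle⟩
    · intro h e he
      obtain ⟨B, hB, hle⟩ := h e he
      exact ⟨sqf B, ⟨B, hB, rfl⟩, hle⟩
  -- R ⊆ radical J
  have hRrad : R ≤ J.radical := by
    rw [hR, Ideal.span_le]
    rintro m ⟨B, hB, rfl⟩
    obtain ⟨m0, hm0, hz⟩ := (elimIdeal_eq_top_iff J Bᶜ).1 hB
    set N : ℕ := (m0.sum fun _ k => k) + 1 with hN
    refine ⟨N, ?_⟩
    rw [prod_X_eq, monomial_pow, one_pow]
    refine mono_mem_of_le hm0.1 ?_
    intro j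
    rw [Finsupp.smul_apply, sqf_apply]
    by_cases hj : j ∈ B
    · simp only [hj, if_true, smul_eq_mul, mul_one]
      exact le_trans (apply_le_sum m0 j) (Nat.le_succ _)
    · have : m0 j = 0 := hz j (Finset.mem_compl.2 hj)
      simp [this]
  -- J ⊆ R
  have hJR : J ≤ R := by
    obtain ⟨G, hG⟩ := hmon
    rw [hG, Ideal.span_le]
    rintro q ⟨g, hg, rfl⟩
    show (monomial g (1 : K) : MvPolynomial (Fin n) K) ∈ R
    have hgJ : (monomial g (1 : K) : MvPolynomial (Fin n) K) ∈ J := by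
      rw [hG]; exact Ideal.subset_span ⟨g, hg, rfl⟩
    obtain ⟨m, hm, hle⟩ := exists_minGen hgJ
    rw [memR, support_monomial_one]
    intro e he
    rw [Finset.mem_singleton] at he
    subst he
    refine ⟨m.support, ?_, ?_⟩
    · rw [elimIdeal_eq_top_iff]
      exact ⟨m, hm, fun i hi => Finsupp.notMem_support_iff.1 (Finset.mem_compl.1 hi)⟩
    · intro j
      rw [sqf_apply]
      by_cases hj : j ∈ m.support
      · simp only [hj, if_true]
        exact le_trans (Nat.one_le_iff_ne_zero.2 (Finsupp.mem_support_iff.1 hj)) (hle j)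
      · simp [hj]
  -- R is radical
  have hRradical : R.radical ≤ R := by
    intro p hp
    obtain ⟨k, hk⟩ := hp
    by_contra hpR
    rw [memR] at hpR
    push_neg at hpR
    obtain ⟨e, he, hbad⟩ := hpR
    set C : Finset (Fin n) := e.support with hC
    set φ : MvPolynomial (Fin n) K →ₐ[K] MvPolynomial (Fin n) K :=
      aeval (fun i => if i ∈ C then (X i : MvPolynomial (Fin n) K) else 0) with hφ
    have hφmono : ∀ (d : Fin n →₀ ℕ) (c : K),
        φ (monomial d c) = if d.support ⊆ C then monomial d c else 0 := by
      intro d c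
      rw [hφ, aeval_monomial]
      by_cases hd : d.support ⊆ C
      · rw [if_pos hd]
        have : (d.prod fun i k => (if i ∈ C then (X i : MvPolynomial (Fin n) K) else 0) ^ k)
            = d.prod fun i k => (X i : MvPolynomial (Fin n) K) ^ k := by
          apply Finset.prod_congr rfl
          intro i hi
          dsimp only
          rw [if_pos (hd hi)]
        rw [this, monomial_eq, algebraMap_eq]
      · rw [if_neg hd]
        obtain ⟨i, hi, hiC⟩ := Finset.not_subset.1 hd
        have : (d.prod fun i k => (if i ∈ C then (X i : MvPolynomial (Fin n) K) else 0) ^ k)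
            = 0 := by
          apply Finset.prod_eq_zero hi
          dsimp only
          rw [if_neg hiC, zero_pow (Finsupp.mem_support_iff.1 hi)]
        rw [this, mul_zero]
    -- φ kills R
    have hφR : ∀ q ∈ R, φ q = 0 := by
      have : R ≤ RingHom.ker (φ : MvPolynomial (Fin n) K →+* MvPolynomial (Fin n) K) := by
        rw [hR, Ideal.span_le]
        rintro m ⟨B, hB, rfl⟩
        have hBbad : ¬ sqf B ≤ e := hbad B hB
        obtain ⟨j, hjle⟩ : ∃ j, ¬ sqf B j ≤ e j := by
          by_contra hc; push_neg at hc; exact hBbad (Finsupp.le_def.2 hc)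
        have hjB : j ∈ B := by
          by_contra hj; rw [sqf_apply, if_neg hj] at hjle; omega
        have hje : e j = 0 := by
          rw [sqf_apply, if_pos hjB] at hjle; omega
        have hjC : j ∉ C := Finsupp.notMem_support_iff.2 hje
        simp only [SetLike.mem_coe, RingHom.mem_ker, AlgHom.coe_toRingHom]
        rw [← Finset.prod_erase_mul _ _ hjB, map_mul]
        have : φ (X j) = 0 := by
          rw [hφ, aeval_X, if_neg hjC]
        rw [this, mul_zero]
      intro q hq
      exact this hq
    -- coeff of φ p at e equals coeff of p at e
    have hcoeff : coeff e (φ p) = coeff e p := by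
      conv_lhs => rw [p.as_sum]
      rw [map_sum, Finset.sum_congr rfl (fun d _ => hφmono d (coeff d p)), coeff_sum]
      rw [Finset.sum_eq_single e]
      · rw [if_pos (subset_refl _), coeff_monomial, if_pos rfl]
      · intro d _ hd
        by_cases hdC : d.support ⊆ C
        · rw [if_pos hdC, coeff_monomial, if_neg hd]
        · rw [if_neg hdC, coeff_zero]
      · intro h
        exact absurd he h
    have hφp : φ p ≠ 0 := by
      intro h0
      rw [h0, MvPolynomial.coeff_zero] at hcoeff
      exact (Finsupp.mem_support_iff.1 he) hcoeff.symm
    by_cases hk0 : k = 0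
    · subst hk0
      rw [pow_zero] at hk
      have h1 : (1 : MvPolynomial (Fin n) K) = monomial 0 1 := by simp [monomial_zero']
      have := (memR 1).1 hk 0 (by rw [h1, support_monomial_one]; exact Finset.mem_singleton_self 0)
      obtain ⟨B, hB, hle⟩ := this
      refine hbad B hB ?_
      exact le_trans hle (Finsupp.le_def.2 fun _ => Nat.zero_le _)
    · have : (φ p) ^ k = 0 := by
        rw [← map_pow]
        exact hφR _ hk
      exact hφp (pow_eq_zero_iff hk0 |>.1 this)
  -- conclude
  refine le_antisymm ?_ hRrad
  exact le_trans (Ideal.radical_mono hJR) hRradical
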